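/- Fix ψ ≥ 0, Gc > 0, l > 0, α > 0, d ∈ ℝ, and φₙ with φₙ ≤ 1, and let φ̄ = min( max( (2ψ + αd)/(2ψ + α + Gc/l), φₙ ), 1 ). Then φₙ ≤ φ̄ ≤ 1 (so fracture irreversibility and the bound φ ≤ 1 hold exactly), and φ̄ satisfies the pointwise variational inequality ( −2(1−φ̄)ψ + (Gc/l)·φ̄ + α(φ̄ − d) ) · (φ̂ − φ̄) ≥ 0 for every φ̂ ∈ [φₙ, 1]. -/

import Mathlib

/-- The clamped AT2 local phase-field value satisfies the irreversibility bounds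
`φₙ ≤ φ̄ ≤ 1` and the pointwise variational inequality
`f′(φ̄)(φ̂ − φ̄) ≥ 0` for every admissible `φ̂ ∈ [φₙ, 1]`. -/
theorem at2_clamped_variational_inequality
    (ψ Gc l α d φn : ℝ) (hψ : 0 ≤ ψ) (hGc : 0 < Gc) (hl : 0 < l) (hα : 0 < α)
    (hφn : φn ≤ 1) :
    let φbar : ℝ := min (max ((2 * ψ + α * d) / (2 * ψ + α + Gc / l)) φn) 1
    (φn ≤ φbar ∧ φbar ≤ 1) ∧
    (∀ φhat ∈ Set.Icc φn 1,
      (-2 * (1 - φbar) * ψ + (Gc / l) * φbar + α * (φbar - d)) * (φhat - φbar) ≥ 0) := by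
  intro φbar
  have hA : 0 < 2 * ψ + α + Gc / l := by positivity
  set φstar : ℝ := (2 * ψ + α * d) / (2 * ψ + α + Gc / l) with hφstar
  have key : ∀ φ : ℝ, -2 * (1 - φ) * ψ + (Gc / l) * φ + α * (φ - d)
      = (2 * ψ + α + Gc / l) * (φ - φstar) := by
    intro φ
    rw [hφstar]
    field_simp [hφstar]
    ring
  have hbnd : φn ≤ φbar ∧ φbar ≤ 1 := by
    constructor
    · exact le_min (le_max_right _ _) hφn
    · exact min_le_right _ _
  refine ⟨hbnd, ?_⟩
  intro φhat hφhat
  rw [key]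
  rcases le_total φstar φn with h1 | h1
  · have hφbar : φbar = φn := by
      simp only [φbar, ← hφstar, max_eq_right h1, min_eq_left hφn]
    rw [hφbar]
    have h2 : 0 ≤ φn - φstar := by linarith
    have h3 : 0 ≤ φhat - φn := by linarith [hφhat.1]
    positivity
  · rcases le_total φstar 1 with h2 | h2
    · have hφbar : φbar = φstar := by
        simp only [φbar, ← hφstar, max_eq_left h1, min_eq_left h2]
      rw [hφbar]
      simp
    · have hφbar : φbar = 1 := by
        simp only [φbar, ← hφstar, max_eq_left h1, min_eq_right h2]
      rw [hφbar]
      have h3 : φhat - 1 ≤ 0 := by linarith [hφhat.2]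
      have h4 : 1 - φstar ≤ 0 := by linarith
      nlinarith [mul_nonneg (mul_nonneg hA.le (neg_nonneg.2 h4)) (neg_nonneg.2 h3)]
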